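/- The claim 'every extreme point of the set of affine self-maps of a polytope maps vertices to vertices' fails for general polytopes: let P ⊆ ℝ² be the trapezoid with vertices A=(0,0), B=(8,0), C=(4,2), D=(0,2). There exists an affine map φ with φ(P) ⊆ P, φ(A)=D, φ(D)=A, φ(B)=C, which is an extreme point of the set of affine self-maps of P, yet φ(C)=(2,0) is not a vertex of P. -/

import Mathlib

noncomputable def phi0 : (ℝ × ℝ) →ᵃ[ℝ] ℝ × ℝ where
  toFun p := (p.1 / 2, 2 - p.2)
  linear :=
    { toFun := fun p => (p.1 / 2, -p.2)
      map_add' := by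
        intro a b
        simp [Prod.ext_iff]
        try constructor
        all_goals ring
      map_smul' := by
        intro c a
        simp [Prod.ext_iff]
        try constructor
        all_goals ring
    }
  map_vadd' := by
    intro p v
    simp [Prod.ext_iff]
    try constructor
        all_goals ring

example : phi0 (0,0) = ((0:ℝ),(2:ℝ)) := by simp [phi0]

lemma affine_eval (ψ : (ℝ × ℝ) →ᵃ[ℝ] ℝ × ℝ) (p : ℝ × ℝ) :
    ψ p = ψ (0,0) + (p.1/8) • (ψ (8,0) - ψ (0,0)) + (p.2/2) • (ψ (0,2) - ψ (0,0)) := by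
  have h : ∀ v : ℝ × ℝ, ψ v = ψ.linear v + ψ (0,0) := by
    intro v
    have := ψ.map_vadd (0,0) v
    rwa [vadd_eq_add, vadd_eq_add, show v + ((0:ℝ),(0:ℝ)) = v from Prod.ext (add_zero _) (add_zero _)] at this
  have h8 : ψ.linear (8,0) = ψ (8,0) - ψ (0,0) := by
    rw [eq_sub_iff_add_eq]; exact (h _).symm
  have h2 : ψ.linear (0,2) = ψ (0,2) - ψ (0,0) := by
    rw [eq_sub_iff_add_eq]; exact (h _).symm
  have hp : ψ.linear p = (p.1/8) • ψ.linear (8,0) + (p.2/2) • ψ.linear (0,2) := by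
    have hc : p = (p.1/8) • ((8:ℝ),(0:ℝ)) + (p.2/2) • ((0:ℝ),(2:ℝ)) := by
      simp [Prod.ext_iff]
      try constructor
      all_goals ring
    rw [show ψ.linear p = ψ.linear ((p.1/8) • ((8:ℝ),(0:ℝ)) + (p.2/2) • ((0:ℝ),(2:ℝ))) from by
      rw [← hc]]
    rw [map_add, map_smul, map_smul]
  calc ψ p = ψ.linear p + ψ (0,0) := h p
    _ = _ := by rw [hp, h8, h2]; abel

lemma hull_subset_Q :
    convexHull ℝ ({(0,0),(8,0),(4,2),(0,2)} : Set (ℝ × ℝ)) ⊆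
      {p : ℝ × ℝ | 0 ≤ p.1 ∧ 0 ≤ p.2 ∧ p.2 ≤ 2 ∧ p.1 + 2*p.2 ≤ 8} := by
  apply convexHull_min
  · intro p hp
    simp only [Set.mem_insert_iff, Set.mem_singleton_iff] at hp
    rcases hp with h|h|h|h <;> subst h <;> norm_num
  · intro x hx y hy a b ha hb hab
    simp only [Set.mem_setOf_eq] at hx hy ⊢
    obtain ⟨hx1, hx2, hx3, hx4⟩ := hx
    obtain ⟨hy1, hy2, hy3, hy4⟩ := hy
    simp only [Prod.fst_add, Prod.snd_add, Prod.smul_fst, Prod.smul_snd, smul_eq_mul]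
    refine ⟨by nlinarith, by nlinarith, by nlinarith, by nlinarith⟩

lemma mem20 : ((2:ℝ),(0:ℝ)) ∈ convexHull ℝ ({(0,0),(8,0),(4,2),(0,2)} : Set (ℝ × ℝ)) := by
  have h0 : ((0:ℝ),(0:ℝ)) ∈ convexHull ℝ ({(0,0),(8,0),(4,2),(0,2)} : Set (ℝ × ℝ)) :=
    subset_convexHull ℝ _ (by simp)
  have h8 : ((8:ℝ),(0:ℝ)) ∈ convexHull ℝ ({(0,0),(8,0),(4,2),(0,2)} : Set (ℝ × ℝ)) :=
    subset_convexHull ℝ _ (by simp)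
  have := (convex_convexHull ℝ ({(0,0),(8,0),(4,2),(0,2)} : Set (ℝ × ℝ))) h0 h8
    (by norm_num : (0:ℝ) ≤ 3/4) (by norm_num : (0:ℝ) ≤ 1/4) (by norm_num)
  convert this using 1
  simp [Prod.ext_iff]
  norm_num

lemma selfmap : ∀ p ∈ convexHull ℝ ({(0,0),(8,0),(4,2),(0,2)} : Set (ℝ × ℝ)),
    phi0 p ∈ convexHull ℝ ({(0,0),(8,0),(4,2),(0,2)} : Set (ℝ × ℝ)) := by
  intro p hp
  have himg : phi0 p ∈ phi0 '' (convexHull ℝ ({(0,0),(8,0),(4,2),(0,2)} : Set (ℝ × ℝ))) :=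
    Set.mem_image_of_mem _ hp
  rw [AffineMap.image_convexHull] at himg
  refine convexHull_min ?_ (convex_convexHull ℝ _) himg
  intro q hq
  simp only [Set.image_insert_eq, Set.image_singleton, Set.mem_insert_iff,
    Set.mem_singleton_iff] at hq
  have e1 : phi0 ((0:ℝ),(0:ℝ)) = ((0:ℝ),(2:ℝ)) := by simp [phi0]
  have e2 : phi0 ((8:ℝ),(0:ℝ)) = ((4:ℝ),(2:ℝ)) := by simp [phi0]; norm_num
  have e3 : phi0 ((4:ℝ),(2:ℝ)) = ((2:ℝ),(0:ℝ)) := by simp [phi0]; norm_num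
  have e4 : phi0 ((0:ℝ),(2:ℝ)) = ((0:ℝ),(0:ℝ)) := by simp [phi0]
  rw [e1, e2, e3, e4] at hq
  rcases hq with h|h|h|h <;> subst h
  · exact subset_convexHull ℝ _ (by simp)
  · exact subset_convexHull ℝ _ (by simp)
  · exact mem20
  · exact subset_convexHull ℝ _ (by simp)

lemma comb_zero {t x y : ℝ} (ht0 : 0 < t) (ht1 : t < 1) (hx : 0 ≤ x) (hy : 0 ≤ y)
    (h : (1-t)*x + t*y = 0) : x = 0 ∧ y = 0 := by
  constructor <;> nlinarith [mul_nonneg ht0.le hy, mul_nonneg (by linarith : (0:ℝ) ≤ 1-t) hx]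

lemma comb_max {t x y c : ℝ} (ht0 : 0 < t) (ht1 : t < 1) (hx : x ≤ c) (hy : y ≤ c)
    (h : (1-t)*x + t*y = c) : x = c ∧ y = c := by
  constructor <;> nlinarith [mul_nonneg ht0.le (by linarith : (0:ℝ) ≤ c - y),
    mul_nonneg (by linarith : (0:ℝ) ≤ 1-t) (by linarith : (0:ℝ) ≤ c - x)]

lemma eq_phi0 (ψ : (ℝ × ℝ) →ᵃ[ℝ] ℝ × ℝ) (h1 : ψ (0,0) = ((0:ℝ),(2:ℝ)))
    (h2 : ψ (0,2) = ((0:ℝ),(0:ℝ))) (h3 : ψ (8,0) = ((4:ℝ),(2:ℝ))) : ψ = phi0 := by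
  apply AffineMap.ext
  intro p
  rw [affine_eval ψ p, affine_eval phi0 p, h1, h2, h3]
  have e1 : phi0 ((0:ℝ),(0:ℝ)) = ((0:ℝ),(2:ℝ)) := by simp [phi0]
  have e2 : phi0 ((8:ℝ),(0:ℝ)) = ((4:ℝ),(2:ℝ)) := by simp [phi0]; norm_num
  have e4 : phi0 ((0:ℝ),(2:ℝ)) = ((0:ℝ),(0:ℝ)) := by simp [phi0]
  rw [e1, e2, e4]

theorem trapezoid_counterexample :
    ∃ φ : (ℝ × ℝ) →ᵃ[ℝ] ℝ × ℝ,
      φ (0, 0) = (0, 2) ∧ φ (0, 2) = (0, 0) ∧ φ (8, 0) = (4, 2) ∧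
      (∀ p ∈ convexHull ℝ ({(0, 0), (8, 0), (4, 2), (0, 2)} : Set (ℝ × ℝ)), φ p ∈
        convexHull ℝ ({(0, 0), (8, 0), (4, 2), (0, 2)} : Set (ℝ × ℝ))) ∧
      φ ∈ Set.extremePoints ℝ
        {ψ : (ℝ × ℝ) →ᵃ[ℝ] ℝ × ℝ |
          ∀ p ∈ convexHull ℝ ({(0, 0), (8, 0), (4, 2), (0, 2)} : Set (ℝ × ℝ)), ψ p ∈
            convexHull ℝ ({(0, 0), (8, 0), (4, 2), (0, 2)} : Set (ℝ × ℝ))} ∧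
      φ (4, 2) = (2, 0) ∧
      ((2, 0) : ℝ × ℝ) ∉ Set.extremePoints ℝ
        (convexHull ℝ ({(0, 0), (8, 0), (4, 2), (0, 2)} : Set (ℝ × ℝ))) := by
  have e1 : phi0 ((0:ℝ),(0:ℝ)) = ((0:ℝ),(2:ℝ)) := by simp [phi0]
  have e2 : phi0 ((8:ℝ),(0:ℝ)) = ((4:ℝ),(2:ℝ)) := by simp [phi0]; norm_num
  have e3 : phi0 ((4:ℝ),(2:ℝ)) = ((2:ℝ),(0:ℝ)) := by simp [phi0]; norm_num
  have e4 : phi0 ((0:ℝ),(2:ℝ)) = ((0:ℝ),(0:ℝ)) := by simp [phi0]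
  refine ⟨phi0, e1, e4, e2, selfmap, ?_, e3, ?_⟩
  · constructor
    · exact selfmap
    · rintro ψ₁ hψ₁ ψ₂ hψ₂ hseg
      rw [openSegment_eq_image] at hseg
      obtain ⟨t, ⟨ht0, ht1⟩, hteq⟩ := hseg
      simp only at hteq
      -- evaluate at the three points
      have hval : ∀ q : ℝ × ℝ, (1 - t) • ψ₁ q + t • ψ₂ q = phi0 q := by
        intro q
        have := congrArg (fun f : (ℝ × ℝ) →ᵃ[ℝ] ℝ × ℝ => f q) hteq
        simpa using this
      have hQ : ∀ (ψ : (ℝ × ℝ) →ᵃ[ℝ] ℝ × ℝ), (∀ p ∈ convexHull ℝ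
          ({(0, 0), (8, 0), (4, 2), (0, 2)} : Set (ℝ × ℝ)), ψ p ∈
          convexHull ℝ ({(0, 0), (8, 0), (4, 2), (0, 2)} : Set (ℝ × ℝ))) →
          ∀ q ∈ ({(0,0),(8,0),(4,2),(0,2)} : Set (ℝ × ℝ)),
          0 ≤ (ψ q).1 ∧ 0 ≤ (ψ q).2 ∧ (ψ q).2 ≤ 2 ∧ (ψ q).1 + 2*(ψ q).2 ≤ 8 := by
        intro ψ hψ q hq
        exact hull_subset_Q (hψ q (subset_convexHull ℝ _ hq))
      have mA : ((0,0) : ℝ × ℝ) ∈ ({(0,0),(8,0),(4,2),(0,2)} : Set (ℝ × ℝ)) := by simp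
      have mB : ((8,0) : ℝ × ℝ) ∈ ({(0,0),(8,0),(4,2),(0,2)} : Set (ℝ × ℝ)) := by simp
      have mD : ((0,2) : ℝ × ℝ) ∈ ({(0,0),(8,0),(4,2),(0,2)} : Set (ℝ × ℝ)) := by simp
      have q1A := hQ ψ₁ hψ₁ _ mA; have q2A := hQ ψ₂ hψ₂ _ mA
      have q1B := hQ ψ₁ hψ₁ _ mB; have q2B := hQ ψ₂ hψ₂ _ mB
      have q1D := hQ ψ₁ hψ₁ _ mD; have q2D := hQ ψ₂ hψ₂ _ mD
      have hA := hval (0,0); rw [e1] at hA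
      have hB := hval (8,0); rw [e2] at hB
      have hD := hval (0,2); rw [e4] at hD
      have hA1 := congrArg Prod.fst hA; have hA2 := congrArg Prod.snd hA
      have hB1 := congrArg Prod.fst hB; have hB2 := congrArg Prod.snd hB
      have hD1 := congrArg Prod.fst hD; have hD2 := congrArg Prod.snd hD
      simp only [Prod.fst_add, Prod.snd_add, Prod.smul_fst, Prod.smul_snd,
        smul_eq_mul] at hA1 hA2 hB1 hB2 hD1 hD2
      norm_num at hA1 hA2 hB1 hB2 hD1 hD2
      obtain ⟨a1, a2, a3, a4⟩ := q1A; obtain ⟨a1', a2', a3', a4'⟩ := q2A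
      obtain ⟨b1, b2, b3, b4⟩ := q1B; obtain ⟨b1', b2', b3', b4'⟩ := q2B
      obtain ⟨d1, d2, d3, d4⟩ := q1D; obtain ⟨d1', d2', d3', d4'⟩ := q2D
      have cA1 := comb_zero ht0 ht1 a1 a1' hA1
      have cA2 := comb_max ht0 ht1 a3 a3' hA2
      have cB2 := comb_max ht0 ht1 b3 b3' hB2
      have cB1 := comb_max ht0 ht1 (by linarith : (ψ₁ (8,0)).1 ≤ 4)
        (by linarith : (ψ₂ (8,0)).1 ≤ 4) hB1
      have cD1 := comb_zero ht0 ht1 d1 d1' hD1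
      have cD2 := comb_zero ht0 ht1 d2 d2' hD2
      have w1 : ψ₁ (0,0) = ((0:ℝ),(2:ℝ)) := Prod.ext_iff.mpr ⟨cA1.1, cA2.1⟩
      have w1' : ψ₂ (0,0) = ((0:ℝ),(2:ℝ)) := Prod.ext_iff.mpr ⟨cA1.2, cA2.2⟩
      have w2 : ψ₁ (0,2) = ((0:ℝ),(0:ℝ)) := Prod.ext_iff.mpr ⟨cD1.1, cD2.1⟩
      have w2' : ψ₂ (0,2) = ((0:ℝ),(0:ℝ)) := Prod.ext_iff.mpr ⟨cD1.2, cD2.2⟩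
      have w3 : ψ₁ (8,0) = ((4:ℝ),(2:ℝ)) := Prod.ext_iff.mpr ⟨cB1.1, cB2.1⟩
      have w3' : ψ₂ (8,0) = ((4:ℝ),(2:ℝ)) := Prod.ext_iff.mpr ⟨cB1.2, cB2.2⟩
      exact eq_phi0 ψ₁ w1 w2 w3
  · rintro ⟨-, hext⟩
    have h0 : ((0:ℝ),(0:ℝ)) ∈ convexHull ℝ ({(0,0),(8,0),(4,2),(0,2)} : Set (ℝ × ℝ)) :=
      subset_convexHull ℝ _ (by simp)
    have h8 : ((8:ℝ),(0:ℝ)) ∈ convexHull ℝ ({(0,0),(8,0),(4,2),(0,2)} : Set (ℝ × ℝ)) :=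
      subset_convexHull ℝ _ (by simp)
    have hseg : ((2,0) : ℝ × ℝ) ∈ openSegment ℝ ((0,0) : ℝ × ℝ) ((8,0) : ℝ × ℝ) := by
      refine ⟨3/4, 1/4, by norm_num, by norm_num, by norm_num, ?_⟩
      simp [Prod.ext_iff]
      norm_num
    have := (hext h0 h8 hseg)
    simp [Prod.ext_iff] at this
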